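/- Let M be an n×n real symmetric matrix with eigen-decomposition M = Σ_{i=1}^n μ_i u_iu_iᵀ, where μ₁ ≥ μ₂ ≥ ... ≥ μ_n and {u_i} is orthonormal, and let X = Σ_{i=1}^k u_iu_iᵀ be the orthogonal projection onto the span of the top k eigenvectors of M. Then for every Z ∈ P_{n,k}: ⟨X − Z, M⟩ ≤ ‖Z − X‖_F²·‖M‖₂, where ⟨A, B⟩ = Tr(AB) is the trace inner product. -/

import Mathlib

open Matrix

noncomputable def frobNorm {m : ℕ} (A : Matrix (Fin m) (Fin m) ℝ) : ℝ :=
  Real.sqrt (∑ i, ∑ j, (A i j) ^ 2)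

/-- `eigval A j` is the `j`-th largest eigenvalue (1-indexed) of the symmetric matrix `A`. -/
noncomputable def eigval {m : ℕ} (A : Matrix (Fin m) (Fin m) ℝ) (j : ℕ) : ℝ :=
  if h : A.IsHermitian then
    if hj : m - j < m then (h.eigenvalues ∘ Tuple.sort h.eigenvalues) ⟨m - j, hj⟩ else 0
  else 0

/-- spectral norm: largest singular value. -/
noncomputable def specNorm {m : ℕ} (A : Matrix (Fin m) (Fin m) ℝ) : ℝ :=
  Real.sqrt (eigval (Aᵀ * A) 1)

/-- `P_{n,k}`: rank-`k` orthogonal projection matrices. -/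
def ProjSet (n k : ℕ) : Set (Matrix (Fin n) (Fin n) ℝ) :=
  {X | ∃ Q : Matrix (Fin n) (Fin k) ℝ, Qᵀ * Q = 1 ∧ X = Q * Qᵀ}

/-- The Fantope `F_{n,k}`. -/
def Fantope (n k : ℕ) : Set (Matrix (Fin n) (Fin n) ℝ) :=
  {X | X.IsSymm ∧ X.PosSemidef ∧ (1 - X).PosSemidef ∧ X.trace = (k : ℝ)}

lemma tr_mul_vmv {m : ℕ} (A : Matrix (Fin m) (Fin m) ℝ) (v w : Fin m → ℝ) :
    (A * vecMulVec v w).trace = w ⬝ᵥ (A *ᵥ v) := by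
  simp only [Matrix.trace, Matrix.diag, Matrix.mul_apply, vecMulVec_apply, dotProduct,
    Matrix.mulVec, Finset.mul_sum]
  refine Finset.sum_congr rfl fun a _ => Finset.sum_congr rfl fun b _ => by ring

lemma vmv_mulVec {m : ℕ} (v w x : Fin m → ℝ) :
    vecMulVec v w *ᵥ x = (w ⬝ᵥ x) • v := by
  funext a
  simp only [Matrix.mulVec, vecMulVec_apply, dotProduct, Pi.smul_apply, smul_eq_mul,
    Finset.sum_mul, Finset.mul_sum]
  exact Finset.sum_congr rfl fun b _ => by ring


lemma sum_mulVec' {ι m : ℕ} (s : Finset (Fin ι)) (A : Fin ι → Matrix (Fin m) (Fin m) ℝ)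
    (x : Fin m → ℝ) : (∑ i ∈ s, A i) *ᵥ x = ∑ i ∈ s, A i *ᵥ x := by
  funext j
  simp only [Matrix.mulVec, dotProduct, Finset.sum_apply, Matrix.sum_apply, Finset.sum_mul]
  rw [Finset.sum_comm]

lemma dotProduct_sum' {ι m : ℕ} (s : Finset (Fin ι)) (v : Fin m → ℝ) (w : Fin ι → Fin m → ℝ) :
    v ⬝ᵥ (∑ i ∈ s, w i) = ∑ i ∈ s, v ⬝ᵥ w i := by
  simp only [dotProduct, Finset.sum_apply, Finset.mul_sum]
  rw [Finset.sum_comm]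

lemma tr_sq {m : ℕ} (A : Matrix (Fin m) (Fin m) ℝ) :
    (A * Aᵀ).trace = ∑ i, ∑ j, (A i j)^2 := by
  simp [Matrix.trace, Matrix.diag, Matrix.mul_apply, sq]

lemma rayleigh_le {m : ℕ} {B : Matrix (Fin m) (Fin m) ℝ} (hB : B.IsHermitian) {c : ℝ}
    (hc : ∀ i, hB.eigenvalues i ≤ c) (x : Fin m → ℝ) :
    x ⬝ᵥ (B *ᵥ x) ≤ c * (x ⬝ᵥ x) := by
  set U : Matrix (Fin m) (Fin m) ℝ := (hB.eigenvectorUnitary : Matrix (Fin m) (Fin m) ℝ) with hU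
  set y : Fin m → ℝ := star U *ᵥ x with hy
  have hUU : U * star U = 1 := Matrix.mem_unitaryGroup_iff.mp hB.eigenvectorUnitary.2
  have key : ∀ w : Fin m → ℝ, x ⬝ᵥ (U *ᵥ w) = y ⬝ᵥ w := by
    intro w
    rw [hy, Matrix.dotProduct_mulVec x U w]
    congr 1
    rw [Matrix.star_eq_conjTranspose, Matrix.conjTranspose_eq_transpose_of_trivial,
      Matrix.mulVec_transpose]
  have hyy : y ⬝ᵥ y = x ⬝ᵥ x := by
    conv_lhs => rw [hy, ← key (star U *ᵥ x)]
    rw [Matrix.mulVec_mulVec, hUU, Matrix.one_mulVec]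
  have hdec : x ⬝ᵥ (B *ᵥ x) = ∑ i, hB.eigenvalues i * (y i)^2 := by
    conv_lhs => rw [hB.spectral_theorem, Unitary.conjStarAlgAut_apply, ← hU, ← Matrix.mulVec_mulVec, ← Matrix.mulVec_mulVec, key, ← hy]
    simp only [dotProduct, Matrix.mulVec_diagonal, Function.comp_apply, RCLike.ofReal_real_eq_id,
      id_eq, sq]
    exact Finset.sum_congr rfl fun i _ => by ring
  rw [hdec, ← hyy]
  calc ∑ i, hB.eigenvalues i * (y i)^2 ≤ ∑ i, c * (y i)^2 :=
        Finset.sum_le_sum fun i _ => mul_le_mul_of_nonneg_right (hc i) (sq_nonneg _)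
    _ = c * (y ⬝ᵥ y) := by simp [dotProduct, Finset.mul_sum, sq]

lemma eigval_top_ge {m : ℕ} (hm : 0 < m) {B : Matrix (Fin m) (Fin m) ℝ} (hB : B.IsHermitian)
    (i : Fin m) : hB.eigenvalues i ≤ eigval B 1 := by
  have hj : m - 1 < m := by omega
  unfold eigval
  rw [dif_pos hB, dif_pos hj]
  set σ := Tuple.sort hB.eigenvalues with hσ
  have h1 : hB.eigenvalues i = (hB.eigenvalues ∘ σ) (σ.symm i) := by simp
  rw [h1]
  refine Tuple.monotone_sort hB.eigenvalues ?_
  rw [Fin.le_def]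
  show _ ≤ m - 1
  have := (σ.symm i).isLt
  omega

theorem stmt14 {n k : ℕ} (hk : 0 < k) (hkn : k ≤ n)
    (μ : Fin n → ℝ) (hμ : Antitone μ)
    (u : Fin n → (Fin n → ℝ))
    (hu : ∀ i j : Fin n, u i ⬝ᵥ u j = if i = j then (1 : ℝ) else 0)
    (M : Matrix (Fin n) (Fin n) ℝ)
    (hM : M = ∑ i : Fin n, μ i • vecMulVec (u i) (u i))
    (X : Matrix (Fin n) (Fin n) ℝ)
    (hX : X = ∑ i ∈ Finset.univ.filter (fun i : Fin n => (i : ℕ) < k),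
      vecMulVec (u i) (u i)) :
    ∀ Z ∈ ProjSet n k,
      ((X - Z) * M).trace ≤ frobNorm (Z - X) ^ 2 * specNorm M := by
  intro Z hZ
  obtain ⟨Q, hQ, hZQ⟩ := hZ
  have hn : 0 < n := lt_of_lt_of_le hk hkn
  set F : Finset (Fin n) := Finset.univ.filter (fun i : Fin n => (i : ℕ) < k) with hF
  -- basic symmetry/idempotence facts
  have hZsymm : Zᵀ = Z := by rw [hZQ, Matrix.transpose_mul, Matrix.transpose_transpose]
  have hZZ : Z * Z = Z := by
    rw [hZQ, Matrix.mul_assoc, ← Matrix.mul_assoc Qᵀ, hQ, Matrix.one_mul]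
  have hXsymm : Xᵀ = X := by
    rw [hX, Matrix.transpose_sum]
    refine Finset.sum_congr rfl fun i _ => ?_
    ext a b
    simp [vecMulVec_apply, mul_comm]
  have hMsymm : Mᵀ = M := by
    rw [hM, Matrix.transpose_sum]
    refine Finset.sum_congr rfl fun i _ => ?_
    rw [Matrix.transpose_smul]
    congr 1
    ext a b
    simp [vecMulVec_apply, mul_comm]
  set z : Fin n → ℝ := fun i => u i ⬝ᵥ (Z *ᵥ u i) with hzdef
  -- z i ≥ 0
  have hz0 : ∀ i, 0 ≤ z i := by
    intro i
    have : z i = (Z *ᵥ u i) ⬝ᵥ (Z *ᵥ u i) := by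
      rw [hzdef]
      show u i ⬝ᵥ (Z *ᵥ u i) = _
      conv_rhs => rw [Matrix.dotProduct_mulVec, ← Matrix.mulVec_transpose Z, hZsymm,
        Matrix.mulVec_mulVec, hZZ]
      rw [dotProduct_comm]
    rw [this]
    exact Finset.sum_nonneg fun j _ => mul_self_nonneg _
  -- z i ≤ 1
  have hz1 : ∀ i, z i ≤ 1 := by
    intro i
    set v : Fin n → ℝ := Z *ᵥ u i with hv
    have hvv : v ⬝ᵥ v = z i := by
      rw [hv]
      conv_lhs => rw [Matrix.dotProduct_mulVec, ← Matrix.mulVec_transpose Z, hZsymm,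
        Matrix.mulVec_mulVec, hZZ]
      rw [dotProduct_comm]
    have huu : u i ⬝ᵥ u i = 1 := by simp [hu i i]
    have huv : u i ⬝ᵥ v = z i := rfl
    have hvu : v ⬝ᵥ u i = z i := by rw [dotProduct_comm]
    have hpos : 0 ≤ (u i - v) ⬝ᵥ (u i - v) :=
      Finset.sum_nonneg fun j _ => mul_self_nonneg _
    rw [sub_dotProduct, dotProduct_sub, dotProduct_sub,
      huu, huv, hvu, hvv] at hpos
    linarith
  -- trace of Z is k
  have htrZ : Z.trace = (k : ℝ) := by
    rw [hZQ, Matrix.trace_mul_comm, hQ, Matrix.trace_one]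
    simp
  -- sum of all z i is k
  set U : Matrix (Fin n) (Fin n) ℝ := Matrix.of u with hUdef
  have hUUt : U * Uᵀ = 1 := by
    ext i j
    rw [Matrix.mul_apply]
    simpa [hUdef, Matrix.one_apply, dotProduct] using hu i j
  have hUtU : Uᵀ * U = 1 := mul_eq_one_comm.mp hUUt
  have hzsum : ∑ i, z i = (k : ℝ) := by
    have h1 : ∀ i, z i = (U * Z * Uᵀ) i i := by
      intro i
      rw [hzdef]
      show u i ⬝ᵥ (Z *ᵥ u i) = _
      simp only [Matrix.mul_apply, Matrix.transpose_apply, dotProduct, Matrix.mulVec,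
        Finset.sum_mul, Finset.mul_sum, hUdef, Matrix.of_apply]
      rw [Finset.sum_comm]
      exact Finset.sum_congr rfl fun a _ => Finset.sum_congr rfl fun b _ => by ring
    calc ∑ i, z i = ∑ i, (U * Z * Uᵀ) i i := Finset.sum_congr rfl fun i _ => h1 i
      _ = (U * Z * Uᵀ).trace := rfl
      _ = (Uᵀ * (U * Z)).trace := (Matrix.trace_mul_comm _ _)
      _ = (k : ℝ) := by rw [← Matrix.mul_assoc, hUtU, Matrix.one_mul, htrZ]
  -- u i ⬝ᵥ X *ᵥ u i
  have hXu : ∀ i, u i ⬝ᵥ (X *ᵥ u i) = if (i : ℕ) < k then (1 : ℝ) else 0 := by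
    intro i
    rw [hX, sum_mulVec', dotProduct_sum']
    have : ∀ j ∈ F, u i ⬝ᵥ (vecMulVec (u j) (u j) *ᵥ u i)
        = if j = i then (1 : ℝ) else 0 := by
      intro j _
      rw [vmv_mulVec, dotProduct_smul, hu i j, hu j i, smul_eq_mul]
      by_cases h : i = j <;> simp [h, eq_comm]
    rw [Finset.sum_congr rfl this, Finset.sum_ite_eq' F i (fun _ => (1:ℝ))]
    simp [hF]
  -- trace identity
  have htrace : ((X - Z) * M).trace
      = ∑ i, μ i * ((if (i : ℕ) < k then (1 : ℝ) else 0) - z i) := by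
    rw [hM, Matrix.mul_sum, Matrix.trace_sum]
    refine Finset.sum_congr rfl fun i _ => ?_
    rw [Matrix.mul_smul, Matrix.trace_smul, tr_mul_vmv, Matrix.sub_mulVec,
      dotProduct_sub, hXu i]
    simp [smul_eq_mul, hzdef]
  -- cardinality of the filter
  have hcard : F.card = k := by
    have : F = Finset.map (Fin.castLEEmb hkn) Finset.univ := by
      ext i
      simp only [hF, Finset.mem_filter, Finset.mem_univ, true_and, Finset.mem_map,
        Fin.castLEEmb_apply]
      constructor
      · intro h
        exact ⟨⟨(i : ℕ), h⟩, Fin.ext rfl⟩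
      · rintro ⟨a, rfl⟩
        simp only [Fin.coe_castLE]
        exact a.isLt
    rw [this, Finset.card_map, Finset.card_univ, Fintype.card_fin]
  set S : ℝ := ∑ i ∈ F, z i with hS
  -- traces of products
  have htrZX : (Z * X).trace = S := by
    rw [hX, Matrix.mul_sum, Matrix.trace_sum]
    exact Finset.sum_congr rfl fun i _ => tr_mul_vmv Z (u i) (u i)
  have htrXX : (X * X).trace = (k : ℝ) := by
    nth_rewrite 2 [hX]
    rw [Matrix.mul_sum, Matrix.trace_sum]
    have : ∀ i ∈ F, (X * vecMulVec (u i) (u i)).trace = 1 := by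
      intro i hi
      rw [tr_mul_vmv, hXu i]
      simp only [hF, Finset.mem_filter, Finset.mem_univ, true_and] at hi
      simp [hi]
    rw [Finset.sum_congr rfl this, Finset.sum_const, hcard]
    simp
  have htrZZ : (Z * Z).trace = (k : ℝ) := by rw [hZZ, htrZ]
  -- frobenius norm squared
  have hfrob : frobNorm (Z - X) ^ 2 = 2 * (k : ℝ) - 2 * S := by
    have h0 : (0:ℝ) ≤ ∑ i, ∑ j, ((Z - X) i j)^2 :=
      Finset.sum_nonneg fun i _ => Finset.sum_nonneg fun j _ => sq_nonneg _
    rw [frobNorm, Real.sq_sqrt h0, ← tr_sq]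
    have hsub : (Z - X)ᵀ = Z - X := by rw [Matrix.transpose_sub, hZsymm, hXsymm]
    rw [hsub, Matrix.sub_mul, Matrix.mul_sub, Matrix.mul_sub, Matrix.trace_sub,
      Matrix.trace_sub, Matrix.trace_sub, htrZZ, htrZX, Matrix.trace_mul_comm X Z, htrZX,
      htrXX]
    ring
  -- spectral norm bound
  have hB : (Mᵀ * M).IsHermitian := by
    simpa [Matrix.conjTranspose_eq_transpose_of_trivial] using Matrix.isHermitian_conjTranspose_mul_self M
  have hMu : ∀ j, M *ᵥ u j = μ j • u j := by
    intro j
    rw [hM, sum_mulVec' Finset.univ]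
    have : ∀ i : Fin n, (μ i • vecMulVec (u i) (u i)) *ᵥ u j
        = if i = j then μ j • u j else 0 := by
      intro i
      rw [Matrix.smul_mulVec, vmv_mulVec, hu i j]
      by_cases h : i = j <;> simp [h]
    rw [Finset.sum_congr rfl fun i _ => this i]
    simp
  have hC : ∀ j, |μ j| ≤ specNorm M := by
    intro j
    have hquad : u j ⬝ᵥ ((Mᵀ * M) *ᵥ u j) = μ j ^ 2 := by
      rw [← Matrix.mulVec_mulVec, hMu j, Matrix.mulVec_smul, hMsymm, hMu j]
      have huu : u j ⬝ᵥ u j = 1 := by simp [hu j j]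
      rw [dotProduct_smul, dotProduct_smul, huu]
      simp [sq]
    have hle : μ j ^ 2 ≤ eigval (Mᵀ * M) 1 := by
      have huu : u j ⬝ᵥ u j = 1 := by simp [hu j j]
      have := rayleigh_le hB (fun i => eigval_top_ge hn hB i) (u j)
      rw [hquad, huu, mul_one] at this
      exact this
    calc |μ j| = Real.sqrt (μ j ^ 2) := (Real.sqrt_sq_eq_abs _).symm
      _ ≤ Real.sqrt (eigval (Mᵀ * M) 1) := Real.sqrt_le_sqrt hle
      _ = specNorm M := rfl
  -- final combination
  have hbound : ((X - Z) * M).trace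
      ≤ specNorm M * ∑ i : Fin n, |(if (i : ℕ) < k then (1 : ℝ) else 0) - z i| := by
    rw [htrace, Finset.mul_sum]
    refine Finset.sum_le_sum fun i _ => ?_
    calc μ i * ((if (i : ℕ) < k then (1 : ℝ) else 0) - z i)
        ≤ |μ i * ((if (i : ℕ) < k then (1 : ℝ) else 0) - z i)| := le_abs_self _
      _ = |μ i| * |(if (i : ℕ) < k then (1 : ℝ) else 0) - z i| := abs_mul _ _
      _ ≤ specNorm M * |(if (i : ℕ) < k then (1 : ℝ) else 0) - z i| :=
          mul_le_mul_of_nonneg_right (hC i) (abs_nonneg _)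
  have habs : ∑ i : Fin n, |(if (i : ℕ) < k then (1 : ℝ) else 0) - z i| = 2 * (k : ℝ) - 2 * S := by
    have key := Finset.sum_filter_add_sum_filter_not Finset.univ
      (fun i : Fin n => (i : ℕ) < k) (fun i => |(if (i : ℕ) < k then (1 : ℝ) else 0) - z i|)
    rw [← key, ← hF]
    have h1 : ∑ i ∈ F, |(if (i : ℕ) < k then (1 : ℝ) else 0) - z i|
        = ∑ i ∈ F, (1 - z i) := by
      refine Finset.sum_congr rfl fun i hi => ?_
      simp only [hF, Finset.mem_filter, Finset.mem_univ, true_and] at hi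
      rw [if_pos hi, abs_of_nonneg (by linarith [hz1 i])]
    have h2 : ∑ i ∈ Finset.univ.filter (fun i : Fin n => ¬ (i : ℕ) < k),
          |(if (i : ℕ) < k then (1 : ℝ) else 0) - z i|
        = ∑ i ∈ Finset.univ.filter (fun i : Fin n => ¬ (i : ℕ) < k), z i := by
      refine Finset.sum_congr rfl fun i hi => ?_
      simp only [Finset.mem_filter, Finset.mem_univ, true_and] at hi
      rw [if_neg hi, zero_sub, abs_neg, abs_of_nonneg (hz0 i)]
    have h3 : ∑ i ∈ Finset.univ.filter (fun i : Fin n => ¬ (i : ℕ) < k), z i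
        = (k : ℝ) - S := by
      have key2 := Finset.sum_filter_add_sum_filter_not Finset.univ
        (fun i : Fin n => (i : ℕ) < k) z
      rw [hzsum, ← hF, ← hS] at key2
      linarith
    have h4 : ∑ i ∈ F, (1 - z i) = (k : ℝ) - S := by
      rw [Finset.sum_sub_distrib, Finset.sum_const, hcard, ← hS]
      simp
    rw [h1, h2, h3, h4]
    ring
  calc ((X - Z) * M).trace ≤ specNorm M * (2 * (k : ℝ) - 2 * S) := by rw [← habs]; exact hbound
    _ = frobNorm (Z - X) ^ 2 * specNorm M := by rw [hfrob]; ring
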